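/- Let a,b,c,d ∈ ℤ, let N be a positive integer, let ζ = exp(2πi/N) ∈ ℂ, and let k,l ∈ ℤ. Set X = diag(ζ^k, ζ^{−k}), Y = diag(ζ^l, ζ^{−l}), and H = ((0,1),(−1,0)) in SL(2,ℂ). Then the relations X^a Y^c = H⁻¹ X H, X^b Y^d = H⁻¹ Y H, and X Y = Y X all hold if and only if N divides (a+1)k + c·l and N divides b·k + (d+1)l. -/

import Mathlib

open Matrix

private lemma zeta_pow_eq_one_iff (N : ℕ) (hN : 0 < N) (ζ : ℂ)
    (hζ : ζ = Complex.exp (2 * Real.pi * Complex.I / N)) (n : ℤ) :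
    ζ ^ n = 1 ↔ (N : ℤ) ∣ n := by
  have hNC : (N : ℂ) ≠ 0 := Nat.cast_ne_zero.mpr hN.ne'
  rw [hζ, ← Complex.exp_int_mul, Complex.exp_eq_one_iff]
  constructor
  · rintro ⟨m, hm⟩
    refine ⟨m, ?_⟩
    have h2 : (2 : ℂ) * Real.pi * Complex.I ≠ 0 := by
      simp [Real.pi_ne_zero, Complex.I_ne_zero]
    field_simp at hm
    have h3 : (n : ℂ) = (m : ℂ) * N :=
      mul_right_cancel₀ h2 (by linear_combination (2 * Real.pi * Complex.I) * hm)
    have h4 : n = m * N := by exact_mod_cast h3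
    rw [h4]; ring
  · rintro ⟨m, rfl⟩
    exact ⟨m, by field_simp; push_cast; ring⟩

private lemma coe_zpow_diag (u : ℂ) (M : Matrix.SpecialLinearGroup (Fin 2) ℂ)
    (hM : (M : Matrix (Fin 2) (Fin 2) ℂ) = !![u, 0; 0, u⁻¹]) (hu : u ≠ 0) (m : ℤ) :
    ((M ^ m : Matrix.SpecialLinearGroup (Fin 2) ℂ) : Matrix (Fin 2) (Fin 2) ℂ)
      = !![u ^ m, 0; 0, (u ^ m)⁻¹] := by
  have hinv : ((M⁻¹ : Matrix.SpecialLinearGroup (Fin 2) ℂ) : Matrix (Fin 2) (Fin 2) ℂ)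
      = !![u⁻¹, 0; 0, u] := by
    rw [Matrix.SpecialLinearGroup.coe_inv, hM, Matrix.adjugate_fin_two]
    norm_num
  induction m using Int.induction_on with
  | zero => simp [Matrix.one_fin_two]
  | succ n ih =>
      rw [_root_.zpow_add_one, Matrix.SpecialLinearGroup.coe_mul, ih, hM, Matrix.mul_fin_two,
        zpow_add_one₀ hu]
      rw [mul_inv]
      norm_num
  | pred n ih =>
      rw [_root_.zpow_sub_one, Matrix.SpecialLinearGroup.coe_mul, ih, hinv, Matrix.mul_fin_two,
        zpow_sub_one₀ hu]
      rw [mul_inv, inv_inv]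
      norm_num

private lemma diag_eq_iff (p q : ℂ) :
    (!![p, 0; 0, p⁻¹] : Matrix (Fin 2) (Fin 2) ℂ) = !![q, 0; 0, q⁻¹] ↔ p = q := by
  constructor
  · intro h
    have := congrFun (congrFun h 0) 0
    simpa using this
  · rintro rfl; rfl

theorem stmt_3 (a b c d : ℤ) (N : ℕ) (hN : 0 < N) (k l : ℤ)
    (ζ : ℂ) (hζ : ζ = Complex.exp (2 * Real.pi * Complex.I / N))
    (X Y H : Matrix.SpecialLinearGroup (Fin 2) ℂ)
    (hX : (X : Matrix (Fin 2) (Fin 2) ℂ) = !![ζ ^ k, 0; 0, ζ ^ (-k)])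
    (hY : (Y : Matrix (Fin 2) (Fin 2) ℂ) = !![ζ ^ l, 0; 0, ζ ^ (-l)])
    (hH : (H : Matrix (Fin 2) (Fin 2) ℂ) = !![0, 1; -1, 0]) :
    (X ^ a * Y ^ c = H⁻¹ * X * H ∧ X ^ b * Y ^ d = H⁻¹ * Y * H ∧ X * Y = Y * X) ↔
      ((N : ℤ) ∣ (a + 1) * k + c * l ∧ (N : ℤ) ∣ b * k + (d + 1) * l) := by
  have hζ0 : ζ ≠ 0 := by rw [hζ]; exact Complex.exp_ne_zero _
  have hu : ζ ^ k ≠ 0 := zpow_ne_zero _ hζ0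
  have hv : ζ ^ l ≠ 0 := zpow_ne_zero _ hζ0
  have hX' : (X : Matrix (Fin 2) (Fin 2) ℂ) = !![ζ ^ k, 0; 0, (ζ ^ k)⁻¹] := by
    rw [hX, _root_.zpow_neg]
  have hY' : (Y : Matrix (Fin 2) (Fin 2) ℂ) = !![ζ ^ l, 0; 0, (ζ ^ l)⁻¹] := by
    rw [hY, _root_.zpow_neg]
  have hHinv : ((H⁻¹ : Matrix.SpecialLinearGroup (Fin 2) ℂ) : Matrix (Fin 2) (Fin 2) ℂ)
      = !![0, -1; 1, 0] := by
    rw [Matrix.SpecialLinearGroup.coe_inv, hH]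
    simp [Matrix.adjugate_fin_two]
  -- conjugation formula
  have hconj : ∀ (P : Matrix.SpecialLinearGroup (Fin 2) ℂ) (p : ℂ),
      (P : Matrix (Fin 2) (Fin 2) ℂ) = !![p, 0; 0, p⁻¹] →
      ((H⁻¹ * P * H : Matrix.SpecialLinearGroup (Fin 2) ℂ) : Matrix (Fin 2) (Fin 2) ℂ)
        = !![p⁻¹, 0; 0, (p⁻¹)⁻¹] := by
    intro P p hP
    rw [Matrix.SpecialLinearGroup.coe_mul, Matrix.SpecialLinearGroup.coe_mul, hHinv, hP, hH,
      Matrix.mul_fin_two, Matrix.mul_fin_two]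
    norm_num
  -- first relation
  have h1 : (X ^ a * Y ^ c = H⁻¹ * X * H) ↔ (N : ℤ) ∣ (a + 1) * k + c * l := by
    erw [Subtype.ext_iff]
    rw [show ((X ^ a * Y ^ c : Matrix.SpecialLinearGroup (Fin 2) ℂ)
          : Matrix (Fin 2) (Fin 2) ℂ)
        = !![(ζ ^ k) ^ a * (ζ ^ l) ^ c, 0; 0, ((ζ ^ k) ^ a * (ζ ^ l) ^ c)⁻¹] by
      rw [Matrix.SpecialLinearGroup.coe_mul, coe_zpow_diag _ X hX' hu,
        coe_zpow_diag _ Y hY' hv, Matrix.mul_fin_two, mul_inv]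
      norm_num]
    rw [hconj X _ hX', diag_eq_iff]
    rw [← _root_.zpow_mul, ← _root_.zpow_mul, ← zpow_add₀ hζ0, ← _root_.zpow_neg,
      ← zeta_pow_eq_one_iff N hN ζ hζ ((a + 1) * k + c * l)]
    constructor
    · intro h
      have : ζ ^ (k * a + l * c) * ζ ^ k = 1 := by
        rw [h, ← zpow_add₀ hζ0]; simp
      rw [← zpow_add₀ hζ0] at this
      convert this using 2; ring
    · intro h
      have : ζ ^ (k * a + l * c + k) = 1 := by convert h using 2; ring
      rw [zpow_add₀ hζ0] at this
      rw [_root_.zpow_neg]; exact eq_inv_of_mul_eq_one_left this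
  have h2 : (X ^ b * Y ^ d = H⁻¹ * Y * H) ↔ (N : ℤ) ∣ b * k + (d + 1) * l := by
    erw [Subtype.ext_iff]
    rw [show ((X ^ b * Y ^ d : Matrix.SpecialLinearGroup (Fin 2) ℂ)
          : Matrix (Fin 2) (Fin 2) ℂ)
        = !![(ζ ^ k) ^ b * (ζ ^ l) ^ d, 0; 0, ((ζ ^ k) ^ b * (ζ ^ l) ^ d)⁻¹] by
      rw [Matrix.SpecialLinearGroup.coe_mul, coe_zpow_diag _ X hX' hu,
        coe_zpow_diag _ Y hY' hv, Matrix.mul_fin_two, mul_inv]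
      norm_num]
    rw [hconj Y _ hY', diag_eq_iff]
    rw [← _root_.zpow_mul, ← _root_.zpow_mul, ← zpow_add₀ hζ0, ← _root_.zpow_neg,
      ← zeta_pow_eq_one_iff N hN ζ hζ (b * k + (d + 1) * l)]
    constructor
    · intro h
      have : ζ ^ (k * b + l * d) * ζ ^ l = 1 := by
        rw [h, ← zpow_add₀ hζ0]; simp
      rw [← zpow_add₀ hζ0] at this
      convert this using 2; ring
    · intro h
      have : ζ ^ (k * b + l * d + l) = 1 := by convert h using 2; ring
      rw [zpow_add₀ hζ0] at this
      rw [_root_.zpow_neg]; exact eq_inv_of_mul_eq_one_left this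
  have h3 : X * Y = Y * X := by
    erw [Subtype.ext_iff]; rw [Matrix.SpecialLinearGroup.coe_mul, Matrix.SpecialLinearGroup.coe_mul,
      hX', hY', Matrix.mul_fin_two, Matrix.mul_fin_two]
    ring_nf
  rw [h1, h2]
  tauto
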